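/- In the one-dimensional case the amoeba is bounded; precisely, for a nonzero univariate Laurent polynomial p, the amoeba 𝒜_p ⊂ ℝ is a finite set of points. In contrast, for n ≥ 2, if the support A of p contains at least two distinct points, then the amoeba 𝒜_p is a nonempty unbounded subset of ℝ^n. -/

import Mathlib

open MeasureTheory Real

noncomputable section

/-- Evaluation of the Laurent polynomial with support `A` and coefficients `c`
at the point `z`. -/
def lEval {n : ℕ} (A : Finset (Fin n → ℤ)) (c : (Fin n → ℤ) → ℂ)
    (z : Fin n → ℂ) : ℂ :=
  ∑ α ∈ A, c α * ∏ i, z i ^ α i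

/-- The coordinatewise logarithm of moduli. -/
def logMap {n : ℕ} (z : Fin n → ℂ) : Fin n → ℝ :=
  fun i => Real.log ‖z i‖

/-- The amoeba of the Laurent polynomial with support `A` and coefficients `c`. -/
def amoeba {n : ℕ} (A : Finset (Fin n → ℤ)) (c : (Fin n → ℤ) → ℂ) :
    Set (Fin n → ℝ) :=
  logMap '' {z | (∀ i, z i ≠ 0) ∧ lEval A c z = 0}

/-- The point of the complex torus with radial coordinates `e^u` and angles `θ`. -/
def tPt {n : ℕ} (u θ : Fin n → ℝ) : Fin n → ℂ :=
  fun i => Complex.exp (u i + θ i * Complex.I)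

/-- The cube `[0, 2π]^n`. -/
def cube (n : ℕ) : Set (Fin n → ℝ) := Set.univ.pi fun _ => Set.Icc 0 (2 * π)

/-- The order vector of a point `u` in the amoeba complement. -/
def order {n : ℕ} (A : Finset (Fin n → ℤ)) (c : (Fin n → ℤ) → ℂ)
    (u : Fin n → ℝ) : Fin n → ℂ := fun j =>
  (((2 * π) ^ n : ℝ) : ℂ)⁻¹ *
    ∫ θ in cube n,
      (∑ α ∈ A, c α * (α j : ℂ) * ∏ i, tPt u θ i ^ α i) / lEval A c (tPt u θ)

/-- The Ronkin function. -/
def ronkin {n : ℕ} (A : Finset (Fin n → ℤ)) (c : (Fin n → ℤ) → ℂ)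
    (x : Fin n → ℝ) : ℝ :=
  ((2 * π) ^ n)⁻¹ * ∫ θ in cube n, Real.log ‖lEval A c (tPt x θ)‖

/-- The Newton polytope of the support `A`. -/
def newton {n : ℕ} (A : Finset (Fin n → ℤ)) : Set (Fin n → ℝ) :=
  convexHull ℝ ((fun (α : Fin n → ℤ) (i : Fin n) => (α i : ℝ)) '' (A : Set (Fin n → ℤ)))

end

section helperLemmas


variable {ι : Type*}

private lemma coeff_auxP (A : Finset ι) (b : ι → ℂ) (e : ι → ℤ) (m : ℤ)
    (hm : ∀ a ∈ A, m ≤ e a) (hinj : Set.InjOn e A) {a : ι} (ha : a ∈ A) :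
    (∑ a ∈ A, Polynomial.C (b a) * Polynomial.X ^ (e a - m).toNat).coeff ((e a - m).toNat)
      = b a := by
  rw [Polynomial.finset_sum_coeff, Finset.sum_eq_single a]
  · simp [Polynomial.coeff_C_mul, Polynomial.coeff_X_pow]
  · intro a' ha' hne
    have hk : (e a' - m).toNat ≠ (e a - m).toNat := by
      intro h
      exact hne (hinj ha' ha (by have := hm a' ha'; have := hm a ha; omega))
    simp [Polynomial.coeff_C_mul, Polynomial.coeff_X_pow, hk.symm]
  · intro h; exact absurd ha h

private lemma sum_zpow_eq (A : Finset ι) (b : ι → ℂ) (e : ι → ℤ) (m : ℤ)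
    (hm : ∀ a ∈ A, m ≤ e a) {w : ℂ} (hw : w ≠ 0) :
    ∑ a ∈ A, b a * w ^ (e a)
      = w ^ m * (∑ a ∈ A, Polynomial.C (b a) * Polynomial.X ^ (e a - m).toNat).eval w := by
  rw [Polynomial.eval_finset_sum, Finset.mul_sum]
  refine Finset.sum_congr rfl fun a ha => ?_
  have h2 : (0:ℤ) ≤ e a - m := by have := hm a ha; omega
  have hpow : w ^ (e a) = w ^ m * w ^ ((e a - m).toNat) := by
    rw [← zpow_natCast w ((e a - m).toNat), ← zpow_add₀ hw]
    congr 1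
    omega
  rw [hpow, Polynomial.eval_mul, Polynomial.eval_C, Polynomial.eval_pow, Polynomial.eval_X]
  ring

private lemma finite_zpow_zeros (A : Finset ι) (b : ι → ℂ) (e : ι → ℤ)
    (hA : A.Nonempty) (hb : ∀ a ∈ A, b a ≠ 0) (hinj : Set.InjOn e A) :
    {w : ℂ | w ≠ 0 ∧ ∑ a ∈ A, b a * w ^ (e a) = 0}.Finite := by
  set m := A.inf' hA e with hm_def
  have hm : ∀ a ∈ A, m ≤ e a := fun a ha => Finset.inf'_le e ha
  set P := ∑ a ∈ A, Polynomial.C (b a) * Polynomial.X ^ (e a - m).toNat with hP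
  have hPne : P ≠ 0 := by
    obtain ⟨a, ha⟩ := hA
    intro h
    have hco := coeff_auxP A b e m hm hinj ha
    rw [← hP, h] at hco
    simp only [Polynomial.coeff_zero] at hco
    exact hb a ha hco.symm
  apply (Polynomial.finite_setOf_isRoot hPne).subset
  rintro w ⟨hw, hsum⟩
  have heq := sum_zpow_eq A b e m hm hw
  rw [hsum, ← hP] at heq
  have : P.eval w = 0 := by
    rcases mul_eq_zero.mp heq.symm with h | h
    · exact absurd h (zpow_ne_zero m hw)
    · exact h
  exact this

private lemma exists_zpow_root (A : Finset ι) (b : ι → ℂ) (e : ι → ℤ)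
    (hb : ∀ a ∈ A, b a ≠ 0) (hinj : Set.InjOn e A) (hcard : 2 ≤ A.card) :
    ∃ w : ℂ, w ≠ 0 ∧ ∑ a ∈ A, b a * w ^ (e a) = 0 := by
  have hA : A.Nonempty := Finset.card_pos.mp (by omega)
  set m := A.inf' hA e with hm_def
  have hm : ∀ a ∈ A, m ≤ e a := fun a ha => Finset.inf'_le e ha
  set P := ∑ a ∈ A, Polynomial.C (b a) * Polynomial.X ^ (e a - m).toNat with hP
  obtain ⟨a0, ha0, ha0m⟩ := Finset.exists_mem_eq_inf' hA e
  have hc0 : P.coeff 0 = b a0 := by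
    have hco := coeff_auxP A b e m hm hinj ha0
    have hz : (e a0 - m).toNat = 0 := by omega
    rwa [hz, ← hP] at hco
  have hPne : P ≠ 0 := fun h => hb a0 ha0 (by rw [h] at hc0; simpa using hc0.symm)
  obtain ⟨a1, ha1, a2, ha2, hne12⟩ := Finset.one_lt_card.mp hcard
  have hkne : (e a1 - m).toNat ≠ (e a2 - m).toNat := by
    intro h
    exact hne12 (hinj ha1 ha2 (by have := hm a1 ha1; have := hm a2 ha2; omega))
  have hdeg : 0 < P.degree := by
    rw [Polynomial.degree_eq_natDegree hPne]
    have h1 : (e a1 - m).toNat ≤ P.natDegree :=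
      Polynomial.le_natDegree_of_ne_zero (by rw [← hP] at *; rw [coeff_auxP A b e m hm hinj ha1]; exact hb a1 ha1)
    have h2 : (e a2 - m).toNat ≤ P.natDegree :=
      Polynomial.le_natDegree_of_ne_zero (by rw [coeff_auxP A b e m hm hinj ha2]; exact hb a2 ha2)
    have : 0 < P.natDegree := by omega
    exact_mod_cast this
  obtain ⟨w, hw⟩ := Complex.exists_root hdeg
  have hw0 : w ≠ 0 := by
    intro h
    rw [h] at hw
    have := Polynomial.coeff_zero_eq_eval_zero P
    rw [Polynomial.IsRoot] at hw
    rw [hw] at this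
    exact hb a0 ha0 (by rw [← hc0, this])
  refine ⟨w, hw0, ?_⟩
  rw [sum_zpow_eq A b e m hm hw0, ← hP, show Polynomial.eval w P = 0 from hw, mul_zero]




private lemma prod_zpow_sum {α : Type*} (s : Finset α) {w : ℂ} (hw : w ≠ 0) (f : α → ℤ) :
    ∏ i ∈ s, w ^ f i = w ^ (∑ i ∈ s, f i) := by
  classical
  induction s using Finset.cons_induction with
  | empty => simp
  | cons a s ha ih => rw [Finset.prod_cons, Finset.sum_cons, zpow_add₀ hw, ih]

private lemma digits_eq_zero : ∀ (k : ℕ) (N : ℤ) (δ : Fin k → ℤ), 0 < N →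
    (∀ i, |δ i| < N) → (∑ i, δ i * N ^ (i : ℕ)) = 0 → ∀ i, δ i = 0 := by
  intro k
  induction k with
  | zero => exact fun N δ _ _ _ i => absurd i.2 (by omega)
  | succ k ih =>
    intro N δ hN hlt hsum
    rw [Fin.sum_univ_succ] at hsum
    have hfac : ∑ i : Fin k, δ i.succ * N ^ (i.succ : ℕ)
        = N * ∑ i : Fin k, δ i.succ * N ^ (i : ℕ) := by
      rw [Finset.mul_sum]
      refine Finset.sum_congr rfl fun i _ => ?_
      rw [Fin.val_succ, pow_succ]
      ring
    rw [hfac] at hsum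
    simp only [Fin.val_zero, pow_zero, mul_one] at hsum
    have h0 : δ 0 = 0 := by
      have hdvd : N ∣ δ 0 := ⟨-(∑ i : Fin k, δ i.succ * N ^ (i : ℕ)), by linarith⟩
      exact Int.eq_zero_of_abs_lt_dvd hdvd (hlt 0)
    have hrest : ∑ i : Fin k, δ i.succ * N ^ (i : ℕ) = 0 := by
      rw [h0] at hsum
      have := hsum
      rcases mul_eq_zero.mp (by linarith : N * ∑ i : Fin k, δ i.succ * N ^ (i : ℕ) = 0) with h | h
      · omega
      · exact h
    intro i
    refine Fin.cases h0 (fun j => ih N (fun i => δ i.succ) hN (fun i => hlt i.succ) hrest j) i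

end helperLemmas

/-- In the one-dimensional case the amoeba of a nonzero Laurent polynomial is
a finite set of points; in contrast, for `n ≥ 2`, if the support contains at
least two points then the amoeba is a nonempty unbounded subset of `ℝⁿ`. -/
theorem stmt_19 {n : ℕ} (A : Finset (Fin n → ℤ)) (c : (Fin n → ℤ) → ℂ)
    (hA : A.Nonempty) (hc : ∀ α ∈ A, c α ≠ 0) :
    (n = 1 → (amoeba A c).Finite) ∧
    (2 ≤ n → 2 ≤ A.card →
      (amoeba A c).Nonempty ∧ ¬ Bornology.IsBounded (amoeba A c)) := by
  constructor
  · intro hn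
    subst hn
    have hinj : Set.InjOn (fun α : Fin 1 → ℤ => α 0) A := by
      intro α _ β _ h
      funext i
      rw [Subsingleton.elim i 0]
      exact h
    have key := finite_zpow_zeros A c (fun α => α 0) hA hc hinj
    have hfin : {z : Fin 1 → ℂ | (∀ i, z i ≠ 0) ∧ lEval A c z = 0}.Finite := by
      apply Set.Finite.of_finite_image (f := fun z => z 0)
      · apply key.subset
        rintro w ⟨z, ⟨hz, hz0⟩, rfl⟩
        refine ⟨hz 0, ?_⟩
        rw [← hz0]
        exact (Finset.sum_congr rfl fun α _ => by rw [Fin.prod_univ_one]).symm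
      · intro z1 _ z2 _ h
        funext i
        rw [Subsingleton.elim i 0]
        exact h
    exact hfin.image _
  · intro hn hcard

    classical
    obtain ⟨N, hN_def⟩ : ∃ N : ℤ, N = 1 + ∑ γ ∈ A, ∑ i, |γ i| := ⟨_, rfl⟩
    have habs_nonneg : ∀ γ : Fin n → ℤ, 0 ≤ ∑ i, |γ i| :=
      fun γ => Finset.sum_nonneg fun i _ => abs_nonneg _
    have hN1 : 1 ≤ N := by
      have h := Finset.sum_nonneg (fun γ (_ : γ ∈ A) => habs_nonneg γ)
      linarith
    have hbound : ∀ γ ∈ A, ∀ δ ∈ A, γ ≠ δ → ∀ i, |γ i - δ i| < N := by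
      intro γ hγ δ hδ hne i
      have h1 : |γ i| ≤ ∑ j, |γ j| :=
        Finset.single_le_sum (fun j _ => abs_nonneg (γ j)) (Finset.mem_univ i)
      have h2 : |δ i| ≤ ∑ j, |δ j| :=
        Finset.single_le_sum (fun j _ => abs_nonneg (δ j)) (Finset.mem_univ i)
      have hpair : (∑ j, |γ j|) + (∑ j, |δ j|) ≤ ∑ γ' ∈ A, ∑ i, |γ' i| := by
        have hsub : {γ, δ} ⊆ A := by
          intro x hx
          rcases Finset.mem_insert.mp hx with rfl | hx
          · exact hγ
          · rw [Finset.mem_singleton.mp hx]; exact hδ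
        calc (∑ j, |γ j|) + (∑ j, |δ j|)
            = ∑ γ' ∈ ({γ, δ} : Finset (Fin n → ℤ)), ∑ i, |γ' i| := by
              rw [Finset.sum_pair hne]
          _ ≤ ∑ γ' ∈ A, ∑ i, |γ' i| :=
              Finset.sum_le_sum_of_subset_of_nonneg hsub fun x _ _ => habs_nonneg x
      have h3 := abs_sub (γ i) (δ i)
      linarith
    obtain ⟨e, he_def⟩ : ∃ e : (Fin n → ℤ) → ℤ, e = fun γ => ∑ i : Fin n, γ i * N ^ (i : ℕ) := ⟨_, rfl⟩
    have hinj : Set.InjOn e A := by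
      intro γ hγ δ hδ h
      by_cases hne : γ = δ
      · exact hne
      exfalso
      have hz : ∑ i : Fin n, (γ i - δ i) * N ^ (i : ℕ) = 0 := by
        have h4 : ∑ i : Fin n, (γ i - δ i) * N ^ (i : ℕ) = e γ - e δ := by
          rw [he_def, ← Finset.sum_sub_distrib]
          exact Finset.sum_congr rfl fun i _ => by ring
        rw [h4, h, sub_self]
      have hall := digits_eq_zero n N (fun i : Fin n => γ i - δ i) (by linarith)
        (fun i => hbound γ hγ δ hδ hne i) hz
      exact hne (funext fun i => sub_eq_zero.mp (hall i))
    have key : ∀ R : ℝ, 0 ≤ R → ∃ u ∈ amoeba A c, R ≤ ‖u‖ := by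
      intro R hR
      obtain ⟨i0, hi0⟩ : ∃ i0 : Fin n, (i0 : ℕ) = 0 := ⟨⟨0, by linarith⟩, rfl⟩
      obtain ⟨i1, hi1⟩ : ∃ i1 : Fin n, (i1 : ℕ) = 1 := ⟨⟨1, by linarith⟩, rfl⟩
      have hi01 : i0 ≠ i1 := fun h => by rw [h, hi1] at hi0; exact one_ne_zero hi0
      obtain ⟨x, hx_def⟩ : ∃ x : Fin n → ℝ,
          x = fun i => if i = i0 then R * (N : ℝ) else if i = i1 then -R else 0 := ⟨_, rfl⟩
      have hx0 : x i0 = R * (N : ℝ) := by rw [hx_def]; simp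
      have hx1 : x i1 = -R := by rw [hx_def]; simp [hi01.symm]
      obtain ⟨b, hb_def⟩ : ∃ b : (Fin n → ℤ) → ℂ,
          b = fun γ => c γ * ∏ i, ((Real.exp (x i) : ℂ)) ^ (γ i) := ⟨_, rfl⟩
      have hb : ∀ γ ∈ A, b γ ≠ 0 := by
        intro γ hγ
        rw [hb_def]
        apply mul_ne_zero (hc γ hγ)
        rw [Finset.prod_ne_zero_iff]
        intro i _
        exact zpow_ne_zero _ (by exact_mod_cast (Real.exp_pos (x i)).ne')
      obtain ⟨w, hw0, hwroot⟩ := exists_zpow_root A b e hb hinj hcard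
      obtain ⟨z, hz_def⟩ : ∃ z : Fin n → ℂ,
          z = fun i => (Real.exp (x i) : ℂ) * w ^ ((N : ℤ) ^ (i : ℕ)) := ⟨_, rfl⟩
      have hz0 : ∀ i, z i ≠ 0 := by
        intro i
        rw [hz_def]
        exact mul_ne_zero (by exact_mod_cast (Real.exp_pos (x i)).ne') (zpow_ne_zero _ hw0)
      have hlEval : lEval A c z = 0 := by
        rw [lEval, ← hwroot]
        refine Finset.sum_congr rfl fun γ hγ => ?_
        have hprod : ∏ i, z i ^ γ i
            = (∏ i, ((Real.exp (x i) : ℂ)) ^ γ i) * w ^ (e γ) := by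
          calc ∏ i, z i ^ γ i
              = ∏ i : Fin n, (((Real.exp (x i) : ℂ)) ^ γ i * w ^ ((N : ℤ) ^ (i : ℕ) * γ i)) := by
                refine Finset.prod_congr rfl fun i _ => ?_
                rw [hz_def, mul_zpow, zpow_mul]
            _ = (∏ i, ((Real.exp (x i) : ℂ)) ^ γ i) * ∏ i : Fin n, w ^ ((N : ℤ) ^ (i : ℕ) * γ i) :=
                Finset.prod_mul_distrib
            _ = (∏ i, ((Real.exp (x i) : ℂ)) ^ γ i) * w ^ (∑ i : Fin n, (N : ℤ) ^ (i : ℕ) * γ i) := by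
                rw [prod_zpow_sum Finset.univ hw0]
            _ = _ := by
                rw [he_def]
                simp only
                rw [show (∑ i : Fin n, (N : ℤ) ^ (i : ℕ) * γ i)
                    = ∑ i : Fin n, γ i * N ^ (i : ℕ) from
                  Finset.sum_congr rfl fun i _ => by ring]
        rw [hprod, hb_def]
        ring
      have hmem : logMap z ∈ amoeba A c := ⟨z, ⟨hz0, hlEval⟩, rfl⟩
      refine ⟨logMap z, hmem, ?_⟩
      have hlog : ∀ i, logMap z i = x i + ((N : ℝ) ^ (i : ℕ)) * Real.log ‖w‖ := by
        intro i
        rw [logMap, hz_def]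
        simp only
        rw [norm_mul, norm_zpow, Complex.norm_real, Real.norm_eq_abs, abs_of_pos (Real.exp_pos _),
          Real.log_mul (Real.exp_ne_zero _)
            (zpow_ne_zero _ (norm_ne_zero_iff.mpr hw0)),
          Real.log_exp, Real.log_zpow]
        push_cast
        ring
      obtain ⟨s, hs⟩ : ∃ s : ℝ, s = Real.log ‖w‖ := ⟨_, rfl⟩
      have hu0 : logMap z i0 = R * (N : ℝ) + s := by
        rw [hlog i0, hi0, pow_zero, hx0, hs]; ring
      have hu1 : logMap z i1 = -R + s * (N : ℝ) := by
        rw [hlog i1, hi1, pow_one, hx1, hs]; ring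
      have hkey : logMap z i0 * (N : ℝ) - logMap z i1 = R * ((N : ℝ) ^ 2 + 1) := by
        rw [hu0, hu1]; ring
      have h1 : |logMap z i0| ≤ ‖logMap z‖ := by
        simpa [Real.norm_eq_abs] using norm_le_pi_norm (logMap z) i0
      have h2 : |logMap z i1| ≤ ‖logMap z‖ := by
        simpa [Real.norm_eq_abs] using norm_le_pi_norm (logMap z) i1
      have hNR : (1 : ℝ) ≤ (N : ℝ) := by exact_mod_cast hN1
      have hNpos : (0 : ℝ) < (N : ℝ) := by linarith
      have ha : R * ((N : ℝ) ^ 2 + 1) ≤ ‖logMap z‖ * ((N : ℝ) + 1) := by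
        have b1 : logMap z i0 * (N : ℝ) ≤ |logMap z i0| * (N : ℝ) :=
          mul_le_mul_of_nonneg_right (le_abs_self _) (by linarith)
        have b2 : -logMap z i1 ≤ |logMap z i1| := neg_le_abs _
        have b3 : |logMap z i0| * (N : ℝ) ≤ ‖logMap z‖ * (N : ℝ) :=
          mul_le_mul_of_nonneg_right h1 (by linarith)
        nlinarith [hkey]
      by_contra hlt
      push_neg at hlt
      have t1 : (0:ℝ) ≤ R * ((N : ℝ) * ((N : ℝ) - 1)) :=
        mul_nonneg hR (mul_nonneg hNpos.le (by linarith))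
      have t2 : ‖logMap z‖ * ((N : ℝ) + 1) < R * ((N : ℝ) + 1) :=
        mul_lt_mul_of_pos_right hlt (by linarith)
      nlinarith [ha, t1, t2]
    constructor
    · obtain ⟨u, hu, _⟩ := key 0 le_rfl
      exact ⟨u, hu⟩
    · intro hbdd
      obtain ⟨C, hC⟩ := (isBounded_iff_forall_norm_le).mp hbdd
      obtain ⟨u, hu, hRu⟩ := key (|C| + 1) (by positivity)
      have h1 := hC u hu
      have h2 := le_abs_self C
      linarith
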